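/- For every σ ∈ Σ and every cube K = [−q1, q1] (q > 0), the Lebesgue outer measure of the jump-rate set S_K(σ) satisfies |S_K(σ)| ≤ 2^{d+1}·ψ_K(σ). (Lemma 7.2.) -/

import Mathlib

open Set MeasureTheory

open scoped Classical

noncomputable section

/-- `ℤ* = ℤ ∪ {±∞}`. -/
abbrev ZStar := WithBot (WithTop ℤ)

/-- Condition (ii): on each cube `[−q1, q1]` there are finite coordinate partitions
such that `σ` is constant on each left-closed right-open partition rectangle. -/
def StepStructure (d : ℕ) (σ : (Fin d → ℝ) → ZStar) : Prop :=
  ∀ q : ℝ, 0 < q →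
    ∃ (m : Fin d → ℕ) (s : Fin d → ℕ → ℝ),
      (∀ i, s i 0 = -q ∧ s i (m i) = q ∧ ∀ j, j < m i → s i j < s i (j + 1)) ∧
      (∀ κ : Fin d → ℕ, (∀ i, κ i < m i) →
        ∀ x y : Fin d → ℝ,
          (∀ i, s i (κ i) ≤ x i ∧ x i < s i (κ i + 1)) →
          (∀ i, s i (κ i) ≤ y i ∧ y i < s i (κ i + 1)) →
          σ x = σ y)

/-- Condition (iii): decay at `−∞`:
for every `b`, `lim_{M→∞} sup { |y|_∞^{-d/(d+1)} σ(y) : y ≤ b, |y|_∞ ≥ M } = −∞`. -/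
def DecayZ (d : ℕ) (σ : (Fin d → ℝ) → ZStar) : Prop :=
  ∀ b : Fin d → ℝ, ∀ C : ℝ, ∃ M : ℝ, 0 < M ∧ ∀ y : Fin d → ℝ, y ≤ b → M ≤ ‖y‖ →
    σ y ≤ (((⌊-C * ‖y‖ ^ ((d : ℝ) / ((d : ℝ) + 1))⌋ : ℤ) : WithTop ℤ) : ZStar)

/-- Membership in the state space `Σ`: monotone, locally a step function, decaying
to `−∞` at `−∞`. -/
def InSigma (d : ℕ) (σ : (Fin d → ℝ) → ZStar) : Prop :=
  Monotone σ ∧ StepStructure d σ ∧ DecayZ d σ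

/-- The jump set `S_x(σ) = {y ≤ x : σ(y) = σ(x)}` when `σ(x)` is finite, `∅` otherwise. -/
def Sx (d : ℕ) (σ : (Fin d → ℝ) → ZStar) (x : Fin d → ℝ) : Set (Fin d → ℝ) :=
  if σ x ≠ ⊥ ∧ σ x ≠ ⊤ then {y | y ≤ x ∧ σ y = σ x} else ∅

/-- `y^{b,h}(σ)`: the coordinatewise maximal `y ≤ b` such that `[y,b]` contains
`{x ≤ b : σ(x) ≥ h}` (equal to `b` if that set is empty). -/
def ybh (d : ℕ) (σ : (Fin d → ℝ) → ZStar) (b : Fin d → ℝ) (h : ℤ) : Fin d → ℝ :=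
  if ({x : Fin d → ℝ | x ≤ b ∧ (((h : WithTop ℤ) : ZStar)) ≤ σ x}).Nonempty then
    fun i => min (b i)
      (sInf ((fun x => x i) '' {x : Fin d → ℝ | x ≤ b ∧ (((h : WithTop ℤ) : ZStar)) ≤ σ x}))
  else b

/-- `λ_k(σ) = sup_{h ≤ k−2} (q·1 − y^h)! (k−h)^{−(d+1)}`. -/
def lamK (d : ℕ) (σ : (Fin d → ℝ) → ZStar) (q : ℝ) (k : ℤ) : ℝ :=
  sSup {v : ℝ | ∃ h : ℤ, h ≤ k - 2 ∧
    v = (∏ i, (q - ybh d σ (fun _ => q) h i)) / ((k - h : ℤ) : ℝ) ^ (d + 1)}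

/-- The set of finite values of `σ` on the cube `K = [−q1, q1]`. -/
def finVals (d : ℕ) (σ : (Fin d → ℝ) → ZStar) (q : ℝ) : Set ℤ :=
  {n : ℤ | ∃ x : Fin d → ℝ, x ∈ Set.Icc (fun _ => -q) (fun _ => q) ∧
    σ x = ((n : WithTop ℤ) : ZStar)}

/-- `ψ_K(σ) = ( ∑_{k=I(K,σ)+1}^{J(K,σ)+1} λ_k(σ)² )^{1/2}`, with `ψ_K(σ) = 0` when `σ`
takes no finite value on `K`. Here `I(K,σ)` and `J(K,σ)` are the minimal and maximal
finite values of `σ` on `K`. -/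
def psiK (d : ℕ) (σ : (Fin d → ℝ) → ZStar) (q : ℝ) : ℝ :=
  if (finVals d σ q).Nonempty then
    Real.sqrt (∑ k ∈ Finset.Icc (sInf (finVals d σ q) + 1) (sSup (finVals d σ q) + 1),
      (lamK d σ q k) ^ 2)
  else 0

lemma zstar_cases (a : ZStar) (h1 : a ≠ ⊥) (h2 : a ≠ ⊤) :
    ∃ n : ℤ, a = ((n : WithTop ℤ) : ZStar) := by
  induction a using WithBot.recBotCoe with
  | bot => exact absurd rfl h1
  | coe b =>
    induction b using WithTop.recTopCoe with
    | top => exact absurd (by rfl) h2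
    | coe n => exact ⟨n, rfl⟩

lemma decay_M (d : ℕ) (hd : 1 ≤ d) (σ : (Fin d → ℝ) → ZStar) (hdec : DecayZ d σ) (q : ℝ) :
    ∃ M : ℝ, 0 < M ∧ ∀ (h : ℤ) (z : Fin d → ℝ), z ≤ (fun _ => q) →
      (((h : WithTop ℤ) : ZStar)) ≤ σ z → ∀ i,
      -(max M ((max 0 (-(h:ℝ))) ^ (((d:ℝ)+1)/(d:ℝ)))) ≤ z i := by
  obtain ⟨M, hM, hdm⟩ := hdec (fun _ => q) 1
  refine ⟨M, hM, ?_⟩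
  intro h z hz hσz i
  have hzi : |z i| ≤ ‖z‖ := by
    have := norm_le_pi_norm z i
    simpa [Real.norm_eq_abs] using this
  have hzi' : -‖z‖ ≤ z i := by
    have := neg_abs_le (z i); linarith
  by_cases hn : ‖z‖ < M
  · have : -(max M ((max 0 (-(h:ℝ))) ^ (((d:ℝ)+1)/(d:ℝ)))) ≤ -M := by
      simp [le_max_left]
    linarith [le_max_left M ((max 0 (-(h:ℝ))) ^ (((d:ℝ)+1)/(d:ℝ)))]
  · push_neg at hn
    have h1 := hdm z hz hn
    have h2 : ((h : WithTop ℤ) : ZStar) ≤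
        (((⌊-1 * ‖z‖ ^ ((d:ℝ)/((d:ℝ)+1))⌋ : ℤ) : WithTop ℤ) : ZStar) := le_trans hσz h1
    have h3 : h ≤ ⌊-1 * ‖z‖ ^ ((d:ℝ)/((d:ℝ)+1))⌋ := by exact_mod_cast h2
    have h4 : (h:ℝ) ≤ -(‖z‖ ^ ((d:ℝ)/((d:ℝ)+1))) := by
      have := Int.le_floor.mp h3
      linarith
    have h5 : ‖z‖ ^ ((d:ℝ)/((d:ℝ)+1)) ≤ max 0 (-(h:ℝ)) :=
      le_max_of_le_right (by linarith)
    have hd0 : (0:ℝ) < (d:ℝ) := by exact_mod_cast hd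
    have hab : ((d:ℝ)/((d:ℝ)+1)) * (((d:ℝ)+1)/(d:ℝ)) = 1 := by
      field_simp
    have h6 : ‖z‖ ≤ (max 0 (-(h:ℝ))) ^ (((d:ℝ)+1)/(d:ℝ)) := by
      calc ‖z‖ = ‖z‖ ^ (((d:ℝ)/((d:ℝ)+1)) * (((d:ℝ)+1)/(d:ℝ))) := by
            rw [hab, Real.rpow_one]
        _ = (‖z‖ ^ ((d:ℝ)/((d:ℝ)+1))) ^ (((d:ℝ)+1)/(d:ℝ)) :=
            Real.rpow_mul (norm_nonneg z) _ _
        _ ≤ _ := Real.rpow_le_rpow (by positivity) h5 (by positivity)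
    have : -(max M ((max 0 (-(h:ℝ))) ^ (((d:ℝ)+1)/(d:ℝ)))) ≤ -‖z‖ := by
      have := le_max_right M ((max 0 (-(h:ℝ))) ^ (((d:ℝ)+1)/(d:ℝ)))
      linarith
    linarith

lemma ybh_facts (d : ℕ) (σ : (Fin d → ℝ) → ZStar) (q : ℝ) (hq : 0 < q)
    (B : ℤ → ℝ) (hB : ∀ h, 0 < B h)
    (hlb : ∀ (h : ℤ) (z : Fin d → ℝ), z ≤ (fun _ => q) →
      (((h : WithTop ℤ) : ZStar)) ≤ σ z → ∀ i, -(B h) ≤ z i) :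
    (∀ h i, ybh d σ (fun _ => q) h i ≤ q) ∧
    (∀ h i, -(B h) ≤ ybh d σ (fun _ => q) h i) ∧
    (∀ (h : ℤ) (z : Fin d → ℝ), z ≤ (fun _ => q) → (((h : WithTop ℤ) : ZStar)) ≤ σ z →
      ∀ i, ybh d σ (fun _ => q) h i ≤ z i) ∧
    (∀ h h' : ℤ, h ≤ h' → ∀ i, ybh d σ (fun _ => q) h i ≤ ybh d σ (fun _ => q) h' i) := by
  set b1 : Fin d → ℝ := (fun _ => q) with hb1
  have hSdef : ∀ h : ℤ, {x : Fin d → ℝ | x ≤ b1 ∧ (((h : WithTop ℤ) : ZStar)) ≤ σ x} =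
      {x : Fin d → ℝ | x ≤ b1 ∧ (((h : WithTop ℤ) : ZStar)) ≤ σ x} := fun _ => rfl
  have hbdd : ∀ (h : ℤ) (i : Fin d),
      BddBelow ((fun x => x i) '' {x : Fin d → ℝ | x ≤ b1 ∧ (((h : WithTop ℤ) : ZStar)) ≤ σ x}) := by
    intro h i
    refine ⟨-(B h), ?_⟩
    rintro r ⟨x, hx, rfl⟩
    exact hlb h x hx.1 hx.2 i
  have ha : ∀ h i, ybh d σ b1 h i ≤ q := by
    intro h i
    unfold ybh
    split
    · exact min_le_left _ _
    · exact le_rfl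
  have hbfact : ∀ h i, -(B h) ≤ ybh d σ b1 h i := by
    intro h i
    unfold ybh
    split
    · next hne =>
      refine le_min (by linarith [hB h]) ?_
      refine le_csInf (hne.image _) ?_
      rintro r ⟨x, hx, rfl⟩
      exact hlb h x hx.1 hx.2 i
    · exact by linarith [hB h]
  have hc : ∀ (h : ℤ) (z : Fin d → ℝ), z ≤ b1 → (((h : WithTop ℤ) : ZStar)) ≤ σ z →
      ∀ i, ybh d σ b1 h i ≤ z i := by
    intro h z hz hσz i
    unfold ybh
    rw [if_pos ⟨z, hz, hσz⟩]
    exact le_trans (min_le_right _ _) (csInf_le (hbdd h i) ⟨z, ⟨hz, hσz⟩, rfl⟩)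
  refine ⟨ha, hbfact, hc, ?_⟩
  intro h h' hh i
  have hcast : (((h : WithTop ℤ) : ZStar)) ≤ (((h' : WithTop ℤ) : ZStar)) := by exact_mod_cast hh
  have hsub : {x : Fin d → ℝ | x ≤ b1 ∧ (((h' : WithTop ℤ) : ZStar)) ≤ σ x} ⊆
      {x : Fin d → ℝ | x ≤ b1 ∧ (((h : WithTop ℤ) : ZStar)) ≤ σ x} :=
    fun x hx => ⟨hx.1, le_trans hcast hx.2⟩
  by_cases hne' : ({x : Fin d → ℝ | x ≤ b1 ∧ (((h' : WithTop ℤ) : ZStar)) ≤ σ x}).Nonempty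
  · have hne : ({x : Fin d → ℝ | x ≤ b1 ∧ (((h : WithTop ℤ) : ZStar)) ≤ σ x}).Nonempty :=
      hne'.mono hsub
    unfold ybh
    rw [if_pos hne', if_pos hne]
    exact min_le_min le_rfl
      (csInf_le_csInf (hbdd h i) (hne'.image _) (Set.image_mono hsub))
  · unfold ybh
    rw [if_neg hne']
    have := ha h i
    unfold ybh at this
    exact this

lemma pow_trick (x : ℝ) (hx : 0 ≤ x) (d : ℕ) (hd : 1 ≤ d) :
    (x ^ (((d:ℝ)+1)/(d:ℝ))) ^ d = x ^ (d+1) := by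
  have hd0 : (0:ℝ) < (d:ℝ) := by exact_mod_cast hd
  have h1 : ((((d:ℝ)+1)/(d:ℝ)) * (d:ℝ)) = (d:ℝ) + 1 := by field_simp
  have : (x ^ (((d:ℝ)+1)/(d:ℝ))) ^ (d:ℕ) = (x ^ (((d:ℝ)+1)/(d:ℝ))) ^ ((d:ℕ):ℝ) := by
    rw [Real.rpow_natCast]
  rw [this, ← Real.rpow_mul hx, h1]
  rw [show ((d:ℝ) + 1) = (((d+1:ℕ)):ℝ) by push_cast; ring, Real.rpow_natCast]

lemma lamK_bddAbove (d : ℕ) (hd : 1 ≤ d) (σ : (Fin d → ℝ) → ZStar) (q : ℝ) (hq : 0 < q)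
    (M : ℝ) (hM : 0 < M)
    (hub : ∀ (h : ℤ) (i : Fin d), q - ybh d σ (fun _ => q) h i ≤
      q + max M ((max 0 (-(h:ℝ))) ^ (((d:ℝ)+1)/(d:ℝ))))
    (hnn : ∀ (h : ℤ) (i : Fin d), 0 ≤ q - ybh d σ (fun _ => q) h i)
    (k : ℤ) :
    BddAbove {v : ℝ | ∃ h : ℤ, h ≤ k - 2 ∧
      v = (∏ i, (q - ybh d σ (fun _ => q) h i)) / ((k - h : ℤ) : ℝ) ^ (d + 1)} := by
  have hd0 : (0:ℝ) < (d:ℝ) := by exact_mod_cast hd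
  set A : ℝ := q + M + 1 with hA
  have hA1 : 1 ≤ A := by linarith
  refine ⟨A ^ d * (|(k:ℝ)| + 2) ^ (d+1), ?_⟩
  rintro v ⟨h, hh, rfl⟩
  set p' : ℝ := ((d:ℝ)+1)/(d:ℝ) with hp'
  have hp'0 : 0 ≤ p' := by positivity
  set t : ℝ := ((k - h : ℤ) : ℝ) with ht
  have ht2 : (2:ℝ) ≤ t := by
    rw [ht]; exact_mod_cast (by omega : (2:ℤ) ≤ k - h)
  set u : ℝ := t + |(k:ℝ)| + 1 with hu
  have hu1 : (1:ℝ) ≤ u := by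
    have := abs_nonneg (k:ℝ); rw [hu]; linarith
  have hmaxu : max 0 (-(h:ℝ)) ≤ u := by
    refine max_le (by linarith) ?_
    have h1 : -(h:ℝ) = t - (k:ℝ) := by rw [ht]; push_cast; ring
    have := neg_abs_le (k:ℝ)
    rw [h1, hu]; linarith
  have hEu : (max 0 (-(h:ℝ))) ^ p' ≤ u ^ p' :=
    Real.rpow_le_rpow (le_max_left _ _) hmaxu hp'0
  have hu_one : 1 ≤ u ^ p' := Real.one_le_rpow hu1 hp'0
  have hfac : ∀ i : Fin d, q - ybh d σ (fun _ => q) h i ≤ A * u ^ p' := by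
    intro i
    have h1 := hub h i
    have h2 : max M ((max 0 (-(h:ℝ))) ^ p') ≤ M + u ^ p' := by
      refine max_le (by nlinarith) (by linarith)
    have h3 : q + M + u ^ p' ≤ A * u ^ p' := by nlinarith
    calc q - ybh d σ (fun _ => q) h i ≤ q + max M ((max 0 (-(h:ℝ))) ^ p') := h1
      _ ≤ q + M + u ^ p' := by linarith
      _ ≤ A * u ^ p' := h3
  have hprod : (∏ i, (q - ybh d σ (fun _ => q) h i)) ≤ (A * u ^ p') ^ d := by
    calc (∏ i, (q - ybh d σ (fun _ => q) h i)) ≤ ∏ _i : Fin d, (A * u ^ p') :=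
          Finset.prod_le_prod (fun i _ => hnn h i) (fun i _ => hfac i)
      _ = (A * u ^ p') ^ d := by
          rw [Finset.prod_const, Finset.card_univ, Fintype.card_fin]
  have huu : u ≤ t * (|(k:ℝ)| + 2) := by nlinarith [abs_nonneg (k:ℝ)]
  have hup : (u ^ p') ^ d = u ^ (d+1) := pow_trick u (by linarith) d hd
  have hAu : (A * u ^ p') ^ d = A ^ d * u ^ (d+1) := by
    rw [mul_pow, hup]
  have hkey : (∏ i, (q - ybh d σ (fun _ => q) h i)) ≤
      A ^ d * ((|(k:ℝ)| + 2) ^ (d+1)) * t ^ (d+1) := by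
    have hud1 : u ^ (d+1) ≤ (t * (|(k:ℝ)| + 2)) ^ (d+1) :=
      pow_le_pow_left₀ (by linarith) huu _
    calc (∏ i, (q - ybh d σ (fun _ => q) h i)) ≤ (A * u ^ p') ^ d := hprod
      _ = A ^ d * u ^ (d+1) := hAu
      _ ≤ A ^ d * (t * (|(k:ℝ)| + 2)) ^ (d+1) := by
          refine mul_le_mul_of_nonneg_left hud1 (by positivity)
      _ = A ^ d * ((|(k:ℝ)| + 2) ^ (d+1)) * t ^ (d+1) := by rw [mul_pow]; ring
  have htpos : (0:ℝ) < t ^ (d+1) := by positivity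
  rw [div_le_iff₀ htpos]
  exact hkey

lemma finVals_finite (d : ℕ) (σ : (Fin d → ℝ) → ZStar) (hstep : StepStructure d σ)
    (q : ℝ) (hq : 0 < q) : (finVals d σ q).Finite := by
  obtain ⟨m, s, hpart, hconst⟩ := hstep (2*q) (by linarith)
  have hm : ∀ i, 0 < m i := by
    intro i
    by_contra hmi
    push_neg at hmi
    interval_cases h : m i
    · have h0 := (hpart i).1
      have h1 := (hpart i).2.1
      rw [h] at h1
      rw [h0] at h1
      linarith
  have hloc : ∀ (i : Fin d) (t : ℝ), -(2*q) ≤ t → t < 2*q →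
      ∃ j, j < m i ∧ s i j ≤ t ∧ t < s i (j+1) := by
    intro i t ht1 ht2
    set T : Finset ℕ := (Finset.range (m i)).filter (fun j => s i j ≤ t) with hT
    have h0T : 0 ∈ T := by
      simp only [hT, Finset.mem_filter, Finset.mem_range]
      exact ⟨hm i, by rw [(hpart i).1]; exact ht1⟩
    have hTne : T.Nonempty := ⟨0, h0T⟩
    set j : ℕ := T.max' hTne with hj
    have hjT : j ∈ T := T.max'_mem hTne
    simp only [hT, Finset.mem_filter, Finset.mem_range] at hjT
    refine ⟨j, hjT.1, hjT.2, ?_⟩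
    by_contra hcon
    push_neg at hcon
    have hj1 : j + 1 ≤ m i := hjT.1
    rcases lt_or_eq_of_le hj1 with hlt | heq
    · have : j + 1 ∈ T := by
        simp only [hT, Finset.mem_filter, Finset.mem_range]
        exact ⟨hlt, hcon⟩
      have := T.le_max' _ this
      omega
    · rw [heq, (hpart i).2.1] at hcon
      linarith
  have hsubs : finVals d σ q ⊆ ⋃ κ ∈ (Set.univ.pi (fun i => Set.Iio (m i)) : Set (Fin d → ℕ)),
      {n : ℤ | σ (fun i => s i (κ i)) = ((n : WithTop ℤ) : ZStar)} := by
    rintro n ⟨x, hxK, hx⟩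
    rw [Set.mem_Icc] at hxK
    have hxlb : ∀ i, -(2*q) ≤ x i := fun i => by
      have := hxK.1 i; simp only at this; linarith
    have hxub : ∀ i, x i < 2*q := fun i => by
      have := hxK.2 i; simp only at this; linarith
    have H : ∀ i, ∃ j, j < m i ∧ s i j ≤ x i ∧ x i < s i (j+1) :=
      fun i => hloc i (x i) (hxlb i) (hxub i)
    choose κ hκ1 hκ2 hκ3 using H
    have hval : σ x = σ (fun i => s i (κ i)) := by
      refine hconst κ hκ1 x _ (fun i => ⟨hκ2 i, hκ3 i⟩) (fun i => ⟨le_rfl, ?_⟩)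
      exact (hpart i).2.2 (κ i) (hκ1 i)
    exact Set.mem_biUnion (Set.mem_pi.mpr (fun i _ => hκ1 i))
      (by rw [Set.mem_setOf_eq, ← hval, hx])
  refine Set.Finite.subset ?_ hsubs
  refine Set.Finite.biUnion (Set.Finite.pi (fun i => Set.finite_Iio _)) ?_
  intro κ _
  refine Set.Subsingleton.finite ?_
  intro a ha b hb
  rw [Set.mem_setOf_eq] at ha hb
  have : ((a : WithTop ℤ) : ZStar) = ((b : WithTop ℤ) : ZStar) := by rw [← ha, ← hb]
  exact_mod_cast this

/-- Lemma 7.2: for `σ ∈ Σ` and the cube `K = [−q1, q1]`, the Lebesgue (outer) measure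
of `S_K(σ) = ⋃_{x∈K} S_x(σ)` satisfies `|S_K(σ)| ≤ 2^{d+1} ψ_K(σ)`. -/
theorem volume_SK_le
    (d : ℕ) (hd : 1 ≤ d) (σ : (Fin d → ℝ) → ZStar) (hσ : InSigma d σ)
    (q : ℝ) (hq : 0 < q) :
    volume (⋃ x ∈ Set.Icc (fun _ => -q : Fin d → ℝ) (fun _ => q : Fin d → ℝ), Sx d σ x) ≤
      ENNReal.ofReal (2 ^ (d + 1) * psiK d σ q) := by
  obtain ⟨hmono, hstep, hdec⟩ := hσ
  by_cases hne : (finVals d σ q).Nonempty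
  · -- main case
    set I := sInf (finVals d σ q) with hI
    set J := sSup (finVals d σ q) with hJ
    have hfin := finVals_finite d σ hstep q hq
    have hIJ : I ≤ J := csInf_le_csSup hne hfin.bddBelow hfin.bddAbove
    obtain ⟨M, hM, hMlb⟩ := decay_M d hd σ hdec q
    set B : ℤ → ℝ := fun h => max M ((max 0 (-(h:ℝ))) ^ (((d:ℝ)+1)/(d:ℝ))) with hB
    have hBpos : ∀ h, 0 < B h := fun h => lt_of_lt_of_le hM (le_max_left _ _)
    obtain ⟨hya, hyb, hyc, hyd⟩ := ybh_facts d σ q hq B hBpos hMlb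
    set r : ℤ → ℝ := fun h => ∏ i, (q - ybh d σ (fun _ => q) h i) with hr
    have hrnn : ∀ h, 0 ≤ r h :=
      fun h => Finset.prod_nonneg (fun i _ => by have := hya h i; linarith)
    have hrmono : r I ≤ r (I-1) := by
      refine Finset.prod_le_prod (fun i _ => by have := hya I i; linarith)
        (fun i _ => by have := hyd (I-1) I (by omega) i; linarith)
    have hsub : (⋃ x ∈ Set.Icc (fun _ => -q : Fin d → ℝ) (fun _ => q : Fin d → ℝ), Sx d σ x) ⊆
        Set.Icc (ybh d σ (fun _ => q) I) (fun _ => q) := by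
      intro y hy
      rw [Set.mem_iUnion₂] at hy
      obtain ⟨x, hxK, hySx⟩ := hy
      unfold Sx at hySx
      split at hySx
      · next hfx =>
        obtain ⟨n, hn⟩ := zstar_cases (σ x) hfx.1 hfx.2
        obtain ⟨hyx, hσy⟩ := hySx
        have hnfin : n ∈ finVals d σ q := ⟨x, hxK, hn⟩
        have hIn : I ≤ n := csInf_le hfin.bddBelow hnfin
        have hyq : y ≤ (fun _ => q : Fin d → ℝ) := le_trans hyx (Set.mem_Icc.mp hxK).2
        have hyσ : ((I : WithTop ℤ) : ZStar) ≤ σ y := by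
          rw [hσy, hn]; exact_mod_cast hIn
        exact Set.mem_Icc.mpr ⟨fun i => hyc I y hyq hyσ i, hyq⟩
      · exact absurd hySx (Set.notMem_empty y)
    have hvol : volume (⋃ x ∈ Set.Icc (fun _ => -q : Fin d → ℝ) (fun _ => q : Fin d → ℝ),
        Sx d σ x) ≤ ENNReal.ofReal (r I) := by
      refine le_trans (measure_mono hsub) ?_
      rw [Real.volume_Icc_pi,
        ENNReal.ofReal_prod_of_nonneg (fun i _ => by have := hya I i; linarith)]
    have hub : ∀ (h : ℤ) (i : Fin d), q - ybh d σ (fun _ => q) h i ≤ q + B h :=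
      fun h i => by have := hyb h i; linarith
    have hnn2 : ∀ (h : ℤ) (i : Fin d), 0 ≤ q - ybh d σ (fun _ => q) h i :=
      fun h i => by have := hya h i; linarith
    have hbdd := lamK_bddAbove d hd σ q hq M hM hub hnn2 (I+1)
    have hmem : r (I-1) / (2:ℝ)^(d+1) ∈ {v : ℝ | ∃ h : ℤ, h ≤ (I+1) - 2 ∧
        v = (∏ i, (q - ybh d σ (fun _ => q) h i)) / (((I+1) - h : ℤ) : ℝ) ^ (d + 1)} := by
      refine ⟨I-1, by omega, ?_⟩
      have h2 : ((I+1 - (I-1) : ℤ) : ℝ) = 2 := by push_cast; ring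
      rw [h2]
    have hlam : r (I-1) / (2:ℝ)^(d+1) ≤ lamK d σ q (I+1) := le_csSup hbdd hmem
    have hpsi : psiK d σ q = Real.sqrt (∑ k ∈ Finset.Icc (I+1) (J+1), (lamK d σ q k)^2) := by
      simp only [psiK, if_pos hne]
      rfl
    have hlampsi : lamK d σ q (I+1) ≤ psiK d σ q := by
      rw [hpsi]
      have h1 : (lamK d σ q (I+1))^2 ≤ ∑ k ∈ Finset.Icc (I+1) (J+1), (lamK d σ q k)^2 :=
        Finset.single_le_sum (f := fun k => (lamK d σ q k)^2) (fun k _ => sq_nonneg _) (Finset.mem_Icc.mpr ⟨le_rfl, by omega⟩)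
      calc lamK d σ q (I+1) ≤ |lamK d σ q (I+1)| := le_abs_self _
        _ = Real.sqrt ((lamK d σ q (I+1))^2) := (Real.sqrt_sq_eq_abs _).symm
        _ ≤ _ := Real.sqrt_le_sqrt h1
    refine le_trans hvol (ENNReal.ofReal_le_ofReal ?_)
    have h2pos : (0:ℝ) < 2^(d+1) := by positivity
    have h3 : r (I-1) ≤ lamK d σ q (I+1) * 2^(d+1) := (div_le_iff₀ h2pos).mp hlam
    have h4 : 2^(d+1) * lamK d σ q (I+1) ≤ 2^(d+1) * psiK d σ q :=
      mul_le_mul_of_nonneg_left hlampsi (le_of_lt h2pos)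
    calc r I ≤ r (I-1) := hrmono
      _ ≤ lamK d σ q (I+1) * 2^(d+1) := h3
      _ = 2^(d+1) * lamK d σ q (I+1) := by ring
      _ ≤ 2^(d+1) * psiK d σ q := h4
  · -- no finite values
    have hU : (⋃ x ∈ Set.Icc (fun _ => -q : Fin d → ℝ) (fun _ => q : Fin d → ℝ),
        Sx d σ x) = ∅ := by
      apply Set.eq_empty_iff_forall_notMem.mpr
      intro y hy
      rw [Set.mem_iUnion₂] at hy
      obtain ⟨x, hxK, hySx⟩ := hy
      unfold Sx at hySx
      split at hySx
      · next hfx =>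
        obtain ⟨n, hn⟩ := zstar_cases (σ x) hfx.1 hfx.2
        exact hne ⟨n, x, hxK, hn⟩
      · exact hySx
    rw [hU]
    simp [psiK, hne]

end
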